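/- Let L be a natural number and let j, k be integers with 0 ≤ j < k ≤ 2^L. Then there exists a finite set F of pairs (l, i) of integers with 0 ≤ l ≤ L and 0 ≤ i < 2^l such that: the dyadic intervals [i·2^{-l}, (i+1)·2^{-l}) for (l, i) ∈ F are pairwise disjoint; their union equals [j·2^{-L}, k·2^{-L}); and for each level l, F contains at most 2 pairs whose first coordinate is l. -/

import Mathlib

/-- The level-`l` dyadic interval with index `i`: `[i·2^{-l}, (i+1)·2^{-l})`. -/
def dyadicInterval (l i : ℕ) : Set ℝ :=
  Set.Ico ((i : ℝ) / 2 ^ l) (((i : ℝ) + 1) / 2 ^ l)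

lemma disj_aux {a b c d : ℝ} (h : b ≤ c) : Disjoint (Set.Ico a b) (Set.Ico c d) := by
  rw [Set.disjoint_left]
  rintro x ⟨_, h1⟩ ⟨h2, _⟩
  linarith

lemma glue (F1 F2 F3 : Finset (ℕ × ℕ)) (a a' b' b : ℝ)
    (h1 : (⋃ p ∈ F1, dyadicInterval p.1 p.2) = Set.Ico a a')
    (h2 : (⋃ p ∈ F2, dyadicInterval p.1 p.2) = Set.Ico a' b')
    (h3 : (⋃ p ∈ F3, dyadicInterval p.1 p.2) = Set.Ico b' b)
    (ha : a ≤ a') (hb : a' ≤ b') (hc : b' ≤ b)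
    (p1 : ((F1 : Set (ℕ × ℕ))).Pairwise
        (fun p q => Disjoint (dyadicInterval p.1 p.2) (dyadicInterval q.1 q.2)))
    (p2 : ((F2 : Set (ℕ × ℕ))).Pairwise
        (fun p q => Disjoint (dyadicInterval p.1 p.2) (dyadicInterval q.1 q.2)))
    (p3 : ((F3 : Set (ℕ × ℕ))).Pairwise
        (fun p q => Disjoint (dyadicInterval p.1 p.2) (dyadicInterval q.1 q.2))) :
    (⋃ p ∈ (F1 ∪ F2 ∪ F3), dyadicInterval p.1 p.2) = Set.Ico a b ∧
    ((F1 ∪ F2 ∪ F3 : Finset (ℕ × ℕ)) : Set (ℕ × ℕ)).Pairwise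
        (fun p q => Disjoint (dyadicInterval p.1 p.2) (dyadicInterval q.1 q.2)) := by
  have sub1 : ∀ p ∈ F1, dyadicInterval p.1 p.2 ⊆ Set.Ico a a' := by
    intro p hp
    rw [← h1]; exact Set.subset_biUnion_of_mem (u := fun p => dyadicInterval p.1 p.2) hp
  have sub2 : ∀ p ∈ F2, dyadicInterval p.1 p.2 ⊆ Set.Ico a' b' := by
    intro p hp
    rw [← h2]; exact Set.subset_biUnion_of_mem (u := fun p => dyadicInterval p.1 p.2) hp
  have sub3 : ∀ p ∈ F3, dyadicInterval p.1 p.2 ⊆ Set.Ico b' b := by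
    intro p hp
    rw [← h3]; exact Set.subset_biUnion_of_mem (u := fun p => dyadicInterval p.1 p.2) hp
  constructor
  · have : (⋃ p ∈ (F1 ∪ F2 ∪ F3), dyadicInterval p.1 p.2) =
        (⋃ p ∈ F1, dyadicInterval p.1 p.2) ∪ (⋃ p ∈ F2, dyadicInterval p.1 p.2) ∪
        (⋃ p ∈ F3, dyadicInterval p.1 p.2) := by
      simp only [Finset.set_biUnion_union]
    rw [this, h1, h2, h3, Set.Ico_union_Ico_eq_Ico ha hb,
      Set.Ico_union_Ico_eq_Ico (le_trans ha hb) hc]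
  · intro p hp q hq hpq
    simp only [Finset.coe_union, Set.mem_union, Finset.mem_coe] at hp hq
    rcases hp with (hp | hp) | hp <;> rcases hq with (hq | hq) | hq
    · exact p1 hp hq hpq
    · exact disj_aux le_rfl |>.mono (sub1 p hp) (sub2 q hq)
    · exact disj_aux hb |>.mono (sub1 p hp) (sub3 q hq)
    · exact (disj_aux le_rfl |>.mono (sub1 q hq) (sub2 p hp)).symm
    · exact p2 hp hq hpq
    · exact disj_aux le_rfl |>.mono (sub2 p hp) (sub3 q hq)
    · exact (disj_aux hb |>.mono (sub1 q hq) (sub3 p hp)).symm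
    · exact (disj_aux le_rfl |>.mono (sub2 q hq) (sub3 p hp)).symm
    · exact p3 hp hq hpq
lemma pairwise_of_card_le_one {F : Finset (ℕ × ℕ)} (h : F.card ≤ 1) :
    ((F : Set (ℕ × ℕ))).Pairwise
      (fun p q => Disjoint (dyadicInterval p.1 p.2) (dyadicInterval q.1 q.2)) := by
  have : (F : Set (ℕ × ℕ)).Subsingleton := by
    intro x hx y hy
    exact Finset.card_le_one.mp h x hx y hy
  exact this.pairwise _

lemma good (L : ℕ) : ∀ j k : ℕ, j ≤ k → k ≤ 2 ^ L →
    ∃ F : Finset (ℕ × ℕ),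
      (∀ p ∈ F, p.1 ≤ L ∧ p.2 < 2 ^ p.1) ∧
      (F : Set (ℕ × ℕ)).Pairwise
        (fun p q => Disjoint (dyadicInterval p.1 p.2) (dyadicInterval q.1 q.2)) ∧
      (⋃ p ∈ F, dyadicInterval p.1 p.2) =
        Set.Ico ((j : ℝ) / 2 ^ L) ((k : ℝ) / 2 ^ L) ∧
      ∀ l : ℕ, (F.filter (fun p => p.1 = l)).card ≤ 2 := by
  induction L with
  | zero =>
    intro j k hjk hk
    rcases eq_or_lt_of_le hjk with h | h
    · exact ⟨∅, by simp, by simp, by simp [h, Set.Ico_self], by simp⟩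
    · have hj : j = 0 := by omega
      have hk1 : k = 1 := by omega
      subst hj hk1
      refine ⟨{(0, 0)}, by simp, ?_, ?_, ?_⟩
      · rw [Finset.coe_singleton]; exact Set.pairwise_singleton _ _
      · simp [dyadicInterval]
      · intro l
        calc (Finset.filter (fun p => p.1 = l) {((0:ℕ), (0:ℕ))}).card
            ≤ ({((0:ℕ), (0:ℕ))} : Finset (ℕ × ℕ)).card := Finset.card_filter_le _ _
          _ ≤ 2 := by simp
  | succ L ih =>
    intro j k hjk hk
    rcases eq_or_lt_of_le hjk with h | h
    · exact ⟨∅, by simp, by simp, by simp [h, Set.Ico_self], by simp⟩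
    set j₁ := (j + 1) / 2 with hj₁
    set k₁ := k / 2 with hk₁
    have hjj : j ≤ 2 * j₁ := by omega
    have hj2 : 2 * j₁ ≤ j + 1 := by omega
    have hj₁k₁ : j₁ ≤ k₁ := by omega
    have hkk : 2 * k₁ ≤ k := by omega
    have hk₁L : k₁ ≤ 2 ^ L := by
      have : 2 ^ (L + 1) = 2 * 2 ^ L := by ring
      omega
    -- left piece
    obtain ⟨Fl, hFlu, hFlm, hFlc⟩ :
        ∃ Fl : Finset (ℕ × ℕ),
          (⋃ p ∈ Fl, dyadicInterval p.1 p.2) =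
            Set.Ico ((j : ℝ) / 2 ^ (L + 1)) (((2 * j₁ : ℕ) : ℝ) / 2 ^ (L + 1)) ∧
          (∀ p ∈ Fl, p.1 = L + 1 ∧ p.2 < 2 ^ (L + 1)) ∧ Fl.card ≤ 1 := by
      rcases Nat.even_or_odd j with he | ho
      · have : 2 * j₁ = j := by
          obtain ⟨m, hm⟩ := he; omega
        exact ⟨∅, by simp [this, Set.Ico_self], by simp, by simp⟩
      · have h2 : 2 * j₁ = j + 1 := by
          obtain ⟨m, hm⟩ := ho; omega
        refine ⟨{(L + 1, j)}, ?_, by simp; omega, by simp⟩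
        have : ((2 * j₁ : ℕ) : ℝ) = (j : ℝ) + 1 := by rw [h2]; push_cast; ring
        simp [dyadicInterval, this]
    -- right piece
    obtain ⟨Fr, hFru, hFrm, hFrc⟩ :
        ∃ Fr : Finset (ℕ × ℕ),
          (⋃ p ∈ Fr, dyadicInterval p.1 p.2) =
            Set.Ico (((2 * k₁ : ℕ) : ℝ) / 2 ^ (L + 1)) ((k : ℝ) / 2 ^ (L + 1)) ∧
          (∀ p ∈ Fr, p.1 = L + 1 ∧ p.2 < 2 ^ (L + 1)) ∧ Fr.card ≤ 1 := by
      rcases Nat.even_or_odd k with he | ho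
      · have : 2 * k₁ = k := by
          obtain ⟨m, hm⟩ := he; omega
        exact ⟨∅, by simp [this, Set.Ico_self], by simp, by simp⟩
      · have h2 : 2 * k₁ = k - 1 := by
          obtain ⟨m, hm⟩ := ho; omega
        have h3 : k - 1 < 2 ^ (L + 1) := by omega
        refine ⟨{(L + 1, k - 1)}, ?_, by simp [h3], by simp⟩
        have e1 : (((k - 1 : ℕ)) : ℝ) = ((2 * k₁ : ℕ) : ℝ) := by rw [h2]
        have e2 : (((k - 1 : ℕ)) : ℝ) + 1 = (k : ℝ) := by
          exact_mod_cast congrArg (Nat.cast (R := ℝ)) (show k - 1 + 1 = k by omega)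
        rw [Finset.set_biUnion_singleton]
        unfold dyadicInterval
        rw [e2, e1]
    -- middle piece
    obtain ⟨F', hF'm, hF'p, hF'u, hF'c⟩ := ih j₁ k₁ hj₁k₁ hk₁L
    have hmid : (⋃ p ∈ F', dyadicInterval p.1 p.2) =
        Set.Ico (((2 * j₁ : ℕ) : ℝ) / 2 ^ (L + 1)) (((2 * k₁ : ℕ) : ℝ) / 2 ^ (L + 1)) := by
      rw [hF'u]
      have e : ∀ m : ℕ, ((m : ℝ)) / 2 ^ L = ((2 * m : ℕ) : ℝ) / 2 ^ (L + 1) := by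
        intro m
        push_cast
        rw [pow_succ]
        ring
      rw [e j₁, e k₁]
    -- inequalities
    have hle : ∀ m n : ℕ, m ≤ n → (m : ℝ) / 2 ^ (L + 1) ≤ (n : ℝ) / 2 ^ (L + 1) := by
      intro m n hmn
      gcongr

    obtain ⟨hU, hP⟩ := glue Fl F' Fr _ _ _ _ hFlu hmid hFru
      (hle _ _ hjj) (hle _ _ (by omega)) (hle _ _ hkk)
      (pairwise_of_card_le_one hFlc) hF'p (pairwise_of_card_le_one hFrc)
    refine ⟨Fl ∪ F' ∪ Fr, ?_, hP, hU, ?_⟩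
    · intro p hp
      simp only [Finset.mem_union] at hp
      rcases hp with (hp | hp) | hp
      · exact ⟨(hFlm p hp).1.le, (hFlm p hp).1 ▸ (hFlm p hp).2⟩
      · exact ⟨(hF'm p hp).1.trans (Nat.le_succ L), (hF'm p hp).2⟩
      · exact ⟨(hFrm p hp).1.le, (hFrm p hp).1 ▸ (hFrm p hp).2⟩
    · intro l
      rw [Finset.filter_union, Finset.filter_union]
      refine le_trans (Finset.card_union_le _ _) ?_
      refine le_trans (Nat.add_le_add_right (Finset.card_union_le _ _) _) ?_
      by_cases hl : l = L + 1
      · have : (F'.filter (fun p => p.1 = l)).card = 0 := by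
          rw [Finset.card_eq_zero, Finset.filter_eq_empty_iff]
          intro p hp
          have := (hF'm p hp).1
          omega
        have c1 : (Fl.filter (fun p => p.1 = l)).card ≤ 1 :=
          le_trans (Finset.card_filter_le _ _) hFlc
        have c3 : (Fr.filter (fun p => p.1 = l)).card ≤ 1 :=
          le_trans (Finset.card_filter_le _ _) hFrc
        omega
      · have c1 : (Fl.filter (fun p => p.1 = l)).card = 0 := by
          rw [Finset.card_eq_zero, Finset.filter_eq_empty_iff]
          intro p hp
          have := (hFlm p hp).1
          omega
        have c3 : (Fr.filter (fun p => p.1 = l)).card = 0 := by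
          rw [Finset.card_eq_zero, Finset.filter_eq_empty_iff]
          intro p hp
          have := (hFrm p hp).1
          omega
        have := hF'c l
        omega

theorem stmt_11 (L j k : ℕ) (hjk : j < k) (hk : k ≤ 2 ^ L) :
    ∃ F : Finset (ℕ × ℕ),
      (∀ p ∈ F, p.1 ≤ L ∧ p.2 < 2 ^ p.1) ∧
      (F : Set (ℕ × ℕ)).Pairwise
        (fun p q => Disjoint (dyadicInterval p.1 p.2) (dyadicInterval q.1 q.2)) ∧
      (⋃ p ∈ F, dyadicInterval p.1 p.2) =
        Set.Ico ((j : ℝ) / 2 ^ L) ((k : ℝ) / 2 ^ L) ∧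
      ∀ l : ℕ, (F.filter (fun p => p.1 = l)).card ≤ 2 := by
  exact good L j k hjk.le hk
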